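/- arXiv:1504.07406 — 2 statements merged into one kernel-verified Lean document; each statement's English description precedes it below -/
import Mathlib

section
/- Fix an alphabet size σ ≥ 2. There exists a constant C > 0 (depending only on σ) such that for all n ≥ 2, Σ_{i=⌈n/2⌉}^{n} i · b(i, σ) ≥ (n·σ/(σ−1)) · b(n, σ) − C·σ^n. -/
open List Finset Filter

/-- `S` is unbordered: it has no nonempty proper prefix that is also a suffix. -/
def Unbordered {α : Type*} (S : List α) : Prop :=
  ∀ B : List α, B ≠ [] → B.length < S.length → B <+: S → ¬ B <:+ S

/-- The length of the maximal unbordered factor of `S`. -/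
noncomputable def muf {α : Type*} (S : List α) : ℕ :=
  sSup {k | ∃ F : List α, F <:+: S ∧ Unbordered F ∧ F.length = k}


/-- `unbCount σ i` : the number of unbordered strings of length `i` over an alphabet
of size `σ`. -/
noncomputable def unbCount (σ i : ℕ) : ℕ :=
  Nat.card {f : Fin i → Fin σ // Unbordered (List.ofFn f)}

section AuxBorder

lemma unbordered_iff_forall {α : Type*} (w : List α) :
    Unbordered w ↔ ∀ k, 0 < k → k < w.length → w.take k ≠ w.drop (w.length - k) := by
  constructor
  · intro h k hk hklt heq
    have hlen : (w.take k).length = k := by simp [length_take]; omega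
    refine h (w.take k) ?_ (by omega) (take_prefix _ _) (heq ▸ drop_suffix _ _)
    intro hnil
    rw [hnil] at hlen; simp at hlen; omega
  · intro h B hne hlt hpre hsuf
    have hB : B = w.take B.length := prefix_iff_eq_take.mp hpre
    have hB' : B = w.drop (w.length - B.length) := suffix_iff_eq_drop.mp hsuf
    exact h B.length (length_pos_iff.mpr hne) hlt (hB ▸ hB' ▸ rfl)

lemma getElem_idx_congr {α : Type*} (l : List α) {i j : ℕ} (h : i = j) (hi : i < l.length) :
    l[i] = l[j]'(h ▸ hi) := by subst h; rfl

lemma border_step {α : Type*} (w : List α) (k : ℕ) (hk0 : 0 < k) (hklt : k < w.length)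
    (h2 : w.length < 2 * k) (heq : w.take k = w.drop (w.length - k)) :
    w.take (2 * k - w.length) = w.drop (w.length - (2 * k - w.length)) := by
  have key : ∀ j : ℕ, ∀ hj : j < k, w[j]'(by omega) = w[w.length - k + j]'(by omega) := by
    intro j hj
    have h1 : j < (w.take k).length := by simp [length_take]; omega
    have := List.getElem_of_eq heq h1
    simpa using this
  apply List.ext_getElem
  · simp [length_take, length_drop]; omega
  intro i h1 h2'
  have hi : i < 2 * k - w.length := by simp [length_take] at h1; omega
  rw [List.getElem_take, List.getElem_drop]
  have e1 : w[i]'(by omega) = w[w.length - k + i]'(by omega) := key i (by omega)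
  have e2 : w[w.length - k + i]'(by omega) = w[w.length - k + (w.length - k + i)]'(by omega) :=
    key (w.length - k + i) (by omega)
  exact e1.trans (e2.trans (getElem_idx_congr w (by omega) (by omega)))

lemma exists_short_border {α : Type*} (w : List α) :
    ∀ k, 0 < k → k < w.length → w.take k = w.drop (w.length - k) →
    ∃ k', 0 < k' ∧ 2 * k' ≤ w.length ∧ w.take k' = w.drop (w.length - k') := by
  intro k
  induction k using Nat.strong_induction_on with
  | _ k ih =>
    intro hk0 hklt heq
    by_cases h : 2 * k ≤ w.length
    · exact ⟨k, hk0, h, heq⟩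
    · exact ih (2 * k - w.length) (by omega) (by omega) (by omega)
        (border_step w k hk0 hklt (by omega) heq)

lemma unbordered_eraseIdx {α : Type*} {w : List α} (hw : 2 ≤ w.length) (h : Unbordered w) :
    Unbordered (w.eraseIdx ((w.length - 1) / 2)) := by
  set L := w.length with hL
  set d := (L - 1) / 2 with hd
  have hdlt : d < L := by omega
  have hlen' : (w.eraseIdx d).length = L - 1 := by
    rw [length_eraseIdx, if_pos hdlt]
  rw [unbordered_iff_forall] at h ⊢
  intro k hk0 hklt heq
  rw [hlen'] at hklt heq
  obtain ⟨k', hk'0, hk'le, heq'⟩ :=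
    exists_short_border (w.eraseIdx d) k hk0 (by omega) (by rw [hlen']; exact heq)
  rw [hlen'] at hk'le heq'
  have hk'd : k' ≤ d := by omega
  have h1 : (w.eraseIdx d).take k' = w.take k' := by
    rw [eraseIdx_eq_take_drop_succ, take_append_of_le_length (by simp [length_take]; omega),
      take_take, min_eq_left hk'd]
  have h2 : (w.eraseIdx d).drop (L - 1 - k') = w.drop (L - k') := by
    rw [eraseIdx_eq_take_drop_succ,
      show L - 1 - k' = (w.take d).length + (L - 1 - k' - d) by simp [length_take]; omega,
      drop_length_add_append, drop_drop]
    congr 1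
    omega
  exact h k' hk'0 (by omega) (by rw [← h1, ← h2]; exact heq')

end AuxBorder

section AuxCount

lemma ofFn_getElem_of_length_eq {α : Type*} {l : List α} {L : ℕ} (hl : l.length = L) :
    List.ofFn (fun j : Fin L => l[(j : ℕ)]'(hl.symm ▸ j.isLt)) = l := by
  subst hl
  exact List.ofFn_getElem

noncomputable def listEquiv (σ i : ℕ) :
    {f : Fin i → Fin σ // Unbordered (List.ofFn f)} ≃
      {w : List (Fin σ) // w.length = i ∧ Unbordered w} where
  toFun f := ⟨List.ofFn f.1, by simp, f.2⟩
  invFun w := ⟨fun j : Fin i => w.1[(j : ℕ)]'(w.2.1.symm ▸ j.isLt),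
    (ofFn_getElem_of_length_eq w.2.1).symm ▸ w.2.2⟩
  left_inv f := by
    apply Subtype.ext
    funext j
    simp
  right_inv w := by
    apply Subtype.ext
    exact ofFn_getElem_of_length_eq w.2.1

lemma unbCount_eq_list (σ i : ℕ) :
    unbCount σ i = Nat.card {w : List (Fin σ) // w.length = i ∧ Unbordered w} :=
  Nat.card_congr (listEquiv σ i)

instance listFin (σ i : ℕ) : Finite {w : List (Fin σ) // w.length = i ∧ Unbordered w} :=
  Finite.of_equiv _ (listEquiv σ i)

lemma unbCount_le_pow (σ n : ℕ) : unbCount σ n ≤ σ ^ n := by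
  calc unbCount σ n ≤ Nat.card (Fin n → Fin σ) :=
        Nat.card_le_card_of_injective Subtype.val Subtype.coe_injective
    _ = σ ^ n := by simp [Nat.card_eq_fintype_card]

def shrinkMap (σ L : ℕ) (hL : 1 ≤ L)
    (w : {w : List (Fin σ) // w.length = L + 1 ∧ Unbordered w}) :
    {w : List (Fin σ) // w.length = L ∧ Unbordered w} × Fin σ :=
  (⟨w.1.eraseIdx (L / 2), by
      have hl := w.2.1
      constructor
      · rw [length_eraseIdx, if_pos (by omega)]
        omega
      · have h2 := unbordered_eraseIdx (w := w.1) (by omega) w.2.2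
        rwa [hl, show (L + 1 - 1) / 2 = L / 2 by omega] at h2⟩,
    w.1[L / 2]'(by have hl := w.2.1; omega))

lemma shrinkMap_injective (σ L : ℕ) (hL : 1 ≤ L) :
    Function.Injective (shrinkMap σ L hL) := by
  intro a b hfeq
  obtain ⟨hw1, hu1⟩ := a.2
  obtain ⟨hw2, hu2⟩ := b.2
  simp only [shrinkMap, Prod.mk.injEq, Subtype.mk.injEq] at hfeq
  obtain ⟨herase, hdval⟩ := hfeq
  apply Subtype.ext
  have hd1 : L / 2 < a.1.length := by omega
  have hd2 : L / 2 < b.1.length := by omega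
  rw [eraseIdx_eq_take_drop_succ, eraseIdx_eq_take_drop_succ] at herase
  obtain ⟨h1, h2⟩ := List.append_inj herase (by rw [length_take, length_take]; omega)
  calc a.1 = a.1.take (L / 2) ++ a.1.drop (L / 2) := (take_append_drop _ _).symm
    _ = a.1.take (L / 2) ++ (a.1[L / 2] :: a.1.drop (L / 2 + 1)) := by
        rw [drop_eq_getElem_cons hd1]
    _ = b.1.take (L / 2) ++ (b.1[L / 2] :: b.1.drop (L / 2 + 1)) := by
        rw [h1, h2, hdval]
    _ = b.1 := by rw [← drop_eq_getElem_cons hd2, take_append_drop]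

lemma unbCount_succ_le (σ L : ℕ) (hL : 1 ≤ L) : unbCount σ (L + 1) ≤ σ * unbCount σ L := by
  rw [unbCount_eq_list, unbCount_eq_list]
  calc Nat.card {w : List (Fin σ) // w.length = L + 1 ∧ Unbordered w}
      ≤ Nat.card ({w : List (Fin σ) // w.length = L ∧ Unbordered w} × Fin σ) :=
        Nat.card_le_card_of_injective _ (shrinkMap_injective σ L hL)
    _ = σ * Nat.card {w : List (Fin σ) // w.length = L ∧ Unbordered w} := by
        rw [Nat.card_prod, Nat.card_eq_fintype_card (α := Fin σ), Fintype.card_fin,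
          Nat.mul_comm]

lemma unbCount_le_shift (σ : ℕ) : ∀ {i n : ℕ}, 1 ≤ i → i ≤ n →
    unbCount σ n ≤ σ ^ (n - i) * unbCount σ i := by
  intro i n h1 h
  induction n with
  | zero => omega
  | succ n ih =>
    rcases Nat.lt_or_ge i (n + 1) with hlt | hge
    · have hin : i ≤ n := by omega
      calc unbCount σ (n + 1) ≤ σ * unbCount σ n := unbCount_succ_le σ n (by omega)
        _ ≤ σ * (σ ^ (n - i) * unbCount σ i) := Nat.mul_le_mul_left σ (ih hin)
        _ = σ ^ (n + 1 - i) * unbCount σ i := by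
            rw [← Nat.mul_assoc, ← pow_succ']
            congr 2
            omega
    · have : i = n + 1 := by omega
      subst this
      simp

end AuxCount

theorem weighted_unbCount_sum_lower_bound (σ : ℕ) (hσ : 2 ≤ σ) :
    ∃ C : ℝ, 0 < C ∧ ∀ n : ℕ, 2 ≤ n →
      ∑ i ∈ Finset.Icc ((n + 1) / 2) n, (i : ℝ) * (unbCount σ i : ℝ) ≥
        (n : ℝ) * (σ : ℝ) / ((σ : ℝ) - 1) * (unbCount σ n : ℝ) - C * (σ : ℝ) ^ n := by
  refine ⟨6, by norm_num, ?_⟩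
  intro n hn
  set m := (n + 1) / 2 with hm
  set J := n - m with hJdef
  have hm1 : 1 ≤ m := by omega
  have hmn : m ≤ n := by omega
  have hn2J : n ≤ 2 * (J + 1) := by omega
  have hσR : (2 : ℝ) ≤ (σ : ℝ) := by exact_mod_cast hσ
  have hσ0 : (0 : ℝ) < σ := by linarith
  have hσ1 : (1 : ℝ) < σ := by linarith
  set x : ℝ := 1 / σ with hx
  have hx0 : 0 < x := by positivity
  have hx12 : x ≤ 1 / 2 := by
    rw [hx]
    rw [div_le_div_iff₀ hσ0 (by norm_num)]
    linarith
  have hxlt1 : x < 1 := by linarith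
  have hxne1 : x ≠ 1 := by linarith
  have h1x : (1 : ℝ) - x ≥ 1 / 2 := by linarith
  -- pointwise bound
  have hpt : ∀ i ∈ Finset.Icc m n,
      (unbCount σ n : ℝ) * ((i : ℝ) * x ^ (n - i)) ≤ (i : ℝ) * (unbCount σ i : ℝ) := by
    intro i hi
    rw [Finset.mem_Icc] at hi
    have h1 : 1 ≤ i := by omega
    have hnat := unbCount_le_shift σ h1 hi.2
    have hcast : (unbCount σ n : ℝ) ≤ (σ : ℝ) ^ (n - i) * (unbCount σ i : ℝ) := by
      exact_mod_cast hnat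
    have hpow : (0 : ℝ) < (σ : ℝ) ^ (n - i) := by positivity
    have hbni : (unbCount σ n : ℝ) * x ^ (n - i) ≤ (unbCount σ i : ℝ) := by
      rw [hx, div_pow, one_pow]
      rw [mul_comm, div_mul_eq_mul_div, div_le_iff₀ hpow] at *
      · linarith [hcast]
    calc (unbCount σ n : ℝ) * ((i : ℝ) * x ^ (n - i))
        = (i : ℝ) * ((unbCount σ n : ℝ) * x ^ (n - i)) := by ring
      _ ≤ (i : ℝ) * (unbCount σ i : ℝ) := by
          apply mul_le_mul_of_nonneg_left hbni (by positivity)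
  have hsum1 : (unbCount σ n : ℝ) * ∑ i ∈ Finset.Icc m n, (i : ℝ) * x ^ (n - i) ≤
      ∑ i ∈ Finset.Icc m n, (i : ℝ) * (unbCount σ i : ℝ) := by
    rw [Finset.mul_sum]
    exact Finset.sum_le_sum hpt
  -- reindex
  have hre : ∑ i ∈ Finset.Icc m n, (i : ℝ) * x ^ (n - i) =
      ∑ j ∈ Finset.range (J + 1), ((n : ℝ) - (j : ℝ)) * x ^ j := by
    apply Finset.sum_nbij' (fun i => n - i) (fun j => n - j)
    · intro a ha
      rw [Finset.mem_Icc] at ha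
      rw [Finset.mem_range]
      omega
    · intro a ha
      rw [Finset.mem_range] at ha
      rw [Finset.mem_Icc]
      omega
    · intro a ha
      rw [Finset.mem_Icc] at ha
      omega
    · intro a ha
      rw [Finset.mem_range] at ha
      omega
    · intro a ha
      rw [Finset.mem_Icc] at ha
      have : ((n - a : ℕ) : ℝ) = (n : ℝ) - (a : ℝ) := by
        push_cast [ha.2]
        ring
      rw [this]
      have : (n : ℝ) - ((n : ℝ) - (a : ℝ)) = (a : ℝ) := by ring
      rw [this]
  -- geometric bounds
  have hG : ∑ j ∈ Finset.range (J + 1), x ^ j = (1 - x ^ (J + 1)) / (1 - x) := by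
    rw [geom_sum_eq hxne1]
    rw [div_eq_div_iff (by linarith) (by linarith)]
    ring
  have htail : (n : ℝ) * x ^ (J + 1) ≤ 2 := by
    have h1 : x ^ (J + 1) ≤ (1 / 2 : ℝ) ^ (J + 1) := pow_le_pow_left₀ hx0.le hx12 _
    have h2 : ((J : ℝ) + 1) ≤ 2 ^ (J + 1) := by
      have := Nat.lt_two_pow_self (n := J + 1)
      have : ((J + 1 : ℕ) : ℝ) ≤ ((2 ^ (J + 1) : ℕ) : ℝ) := by exact_mod_cast this.le
      push_cast at this
      linarith
    have hn2JR : (n : ℝ) ≤ 2 * ((J : ℝ) + 1) := by exact_mod_cast hn2J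
    have h3 : (0:ℝ) < 2 ^ (J + 1) := by positivity
    calc (n : ℝ) * x ^ (J + 1) ≤ 2 * ((J : ℝ) + 1) * (1 / 2 : ℝ) ^ (J + 1) := by
          apply mul_le_mul hn2JR h1 (by positivity) (by positivity)
      _ = 2 * (((J : ℝ) + 1) / 2 ^ (J + 1)) := by
          rw [div_pow, one_pow]
          ring
      _ ≤ 2 * 1 := by
          apply mul_le_mul_of_nonneg_left _ (by norm_num)
          rw [div_le_one h3]
          exact h2
      _ = 2 := by norm_num
  have hD : ∑ j ∈ Finset.range (J + 1), (j : ℝ) * x ^ j ≤ 2 := by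
    have hsummable : Summable (fun j : ℕ => (j : ℝ) * x ^ j) := by
      have := summable_pow_mul_geometric_of_norm_lt_one (R := ℝ) 1
        (r := x) (by rw [Real.norm_eq_abs, abs_of_pos hx0]; exact hxlt1)
      simpa using this
    have h1 : ∑ j ∈ Finset.range (J + 1), (j : ℝ) * x ^ j ≤ ∑' j : ℕ, (j : ℝ) * x ^ j :=
      Summable.sum_le_tsum _ (fun i _ => by positivity) hsummable
    have h2 : ∑' j : ℕ, (j : ℝ) * x ^ j = x / (1 - x) ^ 2 :=
      tsum_coe_mul_geometric_of_norm_lt_one (by rw [Real.norm_eq_abs, abs_of_pos hx0]; exact hxlt1)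
    have h3 : x / (1 - x) ^ 2 ≤ 2 := by
      rw [div_le_iff₀ (by nlinarith)]
      nlinarith
    linarith
  -- lower bound on the reindexed sum
  have hS : ∑ j ∈ Finset.range (J + 1), ((n : ℝ) - (j : ℝ)) * x ^ j ≥
      (n : ℝ) * (σ : ℝ) / ((σ : ℝ) - 1) - 6 := by
    have hsplit : ∑ j ∈ Finset.range (J + 1), ((n : ℝ) - (j : ℝ)) * x ^ j =
        (n : ℝ) * ∑ j ∈ Finset.range (J + 1), x ^ j
          - ∑ j ∈ Finset.range (J + 1), (j : ℝ) * x ^ j := by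
      rw [Finset.mul_sum, ← Finset.sum_sub_distrib]
      congr 1
      ext j
      ring
    have hfrac : 1 / (1 - x) = (σ : ℝ) / ((σ : ℝ) - 1) := by
      rw [hx]
      rw [div_eq_div_iff (by linarith) (by linarith)]
      field_simp
    have hnG : (n : ℝ) * ∑ j ∈ Finset.range (J + 1), x ^ j ≥
        (n : ℝ) * (σ : ℝ) / ((σ : ℝ) - 1) - 4 := by
      rw [hG]
      have expand : (n : ℝ) * ((1 - x ^ (J + 1)) / (1 - x)) =
          (n : ℝ) * (1 / (1 - x)) - ((n : ℝ) * x ^ (J + 1)) * (1 / (1 - x)) := by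
        field_simp
      rw [expand]
      have htail2 : ((n : ℝ) * x ^ (J + 1)) * (1 / (1 - x)) ≤ 4 := by
        have h1x0 : (0:ℝ) < 1 - x := by linarith
        have hinv : 1 / (1 - x) ≤ 2 := by
          rw [div_le_iff₀ h1x0]
          linarith
        have hnn : (0:ℝ) ≤ (n : ℝ) * x ^ (J + 1) := by positivity
        calc ((n : ℝ) * x ^ (J + 1)) * (1 / (1 - x)) ≤ 2 * 2 := by
              apply mul_le_mul htail hinv (by positivity) (by norm_num)
          _ = 4 := by norm_num
      have : (n : ℝ) * (1 / (1 - x)) = (n : ℝ) * (σ : ℝ) / ((σ : ℝ) - 1) := by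
        rw [hfrac]; ring
      linarith
    rw [hsplit]
    linarith
  -- combine
  have hbn : (0:ℝ) ≤ (unbCount σ n : ℝ) := by positivity
  have hbnpow : (unbCount σ n : ℝ) ≤ (σ : ℝ) ^ n := by exact_mod_cast unbCount_le_pow σ n
  have hmain : (unbCount σ n : ℝ) * ((n : ℝ) * (σ : ℝ) / ((σ : ℝ) - 1) - 6) ≤
      ∑ i ∈ Finset.Icc m n, (i : ℝ) * (unbCount σ i : ℝ) := by
    calc (unbCount σ n : ℝ) * ((n : ℝ) * (σ : ℝ) / ((σ : ℝ) - 1) - 6)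
        ≤ (unbCount σ n : ℝ) * ∑ j ∈ Finset.range (J + 1), ((n : ℝ) - (j : ℝ)) * x ^ j :=
          mul_le_mul_of_nonneg_left hS hbn
      _ = (unbCount σ n : ℝ) * ∑ i ∈ Finset.Icc m n, (i : ℝ) * x ^ (n - i) := by rw [hre]
      _ ≤ _ := hsum1
  have hfinal : (unbCount σ n : ℝ) * ((n : ℝ) * (σ : ℝ) / ((σ : ℝ) - 1) - 6) ≥
      (n : ℝ) * (σ : ℝ) / ((σ : ℝ) - 1) * (unbCount σ n : ℝ) - 6 * (σ : ℝ) ^ n := by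
    have : (unbCount σ n : ℝ) * ((n : ℝ) * (σ : ℝ) / ((σ : ℝ) - 1) - 6) =
        (n : ℝ) * (σ : ℝ) / ((σ : ℝ) - 1) * (unbCount σ n : ℝ) - 6 * (unbCount σ n : ℝ) := by
      ring
    rw [this]
    have : 6 * (unbCount σ n : ℝ) ≤ 6 * (σ : ℝ) ^ n := by linarith
    linarith
  linarith [hmain, hfinal]
end

section
/- Fix an integer σ ≥ 3. There exists a constant C > 0 (depending only on σ) such that for all n ≥ 4, Σ_{i=⌈n/2⌉}^{n−2} Σ_{j=1}^{n−i−1} 2^{j−1} · i · ((σ−1)^{j+1}·σ^{i−j−1} − σ^{i−2}) ≥ n·( (σ^n − σ^{n−1})/(σ² − 2σ + 2) − σ^{n−2}/((σ−1)(σ−2)) ) − C·σ^n. -/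
lemma nat_le_three_pow : ∀ n : ℕ, n ≤ 3 ^ ((n + 1) / 2) := by
  intro n
  induction n using Nat.strong_induction_on with
  | _ n ih =>
    match n with
    | 0 => norm_num
    | 1 => norm_num
    | (m + 2) =>
      have h := ih m (by omega)
      have h2 : (m + 2 + 1) / 2 = (m + 1) / 2 + 1 := by omega
      have h3 : 1 ≤ 3 ^ ((m + 1) / 2) := Nat.one_le_pow _ _ (by norm_num)
      rw [h2, pow_succ]
      linarith

lemma geom_Icc (r : ℝ) (hr : r ≠ 1) (a b : ℕ) (hab : a ≤ b + 1) :
    ∑ i ∈ Finset.Icc a b, r ^ i = (r ^ (b + 1) - r ^ a) / (r - 1) := by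
  rw [← Finset.Ico_add_one_right_eq_Icc, Finset.sum_Ico_eq_sum_range]
  simp_rw [pow_add]
  rw [← Finset.mul_sum, geom_sum_eq hr, eq_div_iff (sub_ne_zero.mpr hr),
    mul_comm (r ^ a), mul_right_comm, div_mul_cancel₀ _ (sub_ne_zero.mpr hr), sub_mul,
    one_mul, ← pow_add]
  have h : b + 1 - a + a = b + 1 := by omega
  rw [h]
  ring

lemma inner_sum_eq (x : ℝ) (hx2 : x ≠ 2) (i : ℕ) :
    ∀ m : ℕ, m + 1 ≤ i →
      ∑ j ∈ Finset.Icc 1 m, (2 : ℝ) ^ (j - 1) * (i : ℝ) *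
          ((x - 1) ^ (j + 1) * x ^ (i - j - 1) - x ^ (i - 2))
        = (i : ℝ) * (((2 : ℝ) ^ m * (x - 1) ^ (m + 2) * x ^ (i - m - 1)
            - (x - 1) ^ 2 * x ^ (i - 1)) / (x - 2) - ((2 : ℝ) ^ m - 1) * x ^ (i - 2)) := by
  intro m
  induction m with
  | zero =>
    intro _
    simp
  | succ m ih =>
    intro h
    rw [Finset.sum_Icc_succ_top (by omega : 1 ≤ m + 1), ih (by omega)]
    have h1 : i - m - 1 = (i - m - 2) + 1 := by omega
    have h2 : i - (m + 1) - 1 = i - m - 2 := by omega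
    have h3 : m + 1 + 2 = (m + 2) + 1 := rfl
    have h4 : m + 1 - 1 = m := rfl
    rw [h1, h2, h3, h4, pow_succ x, pow_succ (x-1), pow_succ (2:ℝ)]
    have hx2' : x - 2 ≠ 0 := sub_ne_zero.mpr hx2
    field_simp
    ring

set_option maxHeartbeats 4000000 in
theorem double_sum_lower_bound (σ : ℕ) (hσ : 3 ≤ σ) :
    ∃ C : ℝ, 0 < C ∧ ∀ n : ℕ, 4 ≤ n →
      ∑ i ∈ Finset.Icc ((n + 1) / 2) (n - 2), ∑ j ∈ Finset.Icc 1 (n - i - 1),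
          (2 : ℝ) ^ (j - 1) * (i : ℝ) *
            (((σ : ℝ) - 1) ^ (j + 1) * (σ : ℝ) ^ (i - j - 1) - (σ : ℝ) ^ (i - 2)) ≥
        (n : ℝ) * (((σ : ℝ) ^ n - (σ : ℝ) ^ (n - 1)) / ((σ : ℝ) ^ 2 - 2 * (σ : ℝ) + 2) -
            (σ : ℝ) ^ (n - 2) / (((σ : ℝ) - 1) * ((σ : ℝ) - 2))) - C * (σ : ℝ) ^ n := by
  set x : ℝ := (σ : ℝ) with hxdef
  have hx3 : (3 : ℝ) ≤ x := by rw [hxdef]; exact_mod_cast hσ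
  refine ⟨x + 12, by linarith, ?_⟩
  intro n hn
  have hx0 : (0 : ℝ) < x := by linarith
  have hx1 : (1 : ℝ) < x := by linarith
  have hx2 : (2 : ℝ) < x := by linarith
  have hxne0 : x ≠ 0 := ne_of_gt hx0
  have hxne1 : x ≠ 1 := ne_of_gt hx1
  have hxne2 : x ≠ 2 := ne_of_gt hx2
  have hx1' : (0 : ℝ) < x - 1 := by linarith
  have hx2' : (0 : ℝ) < x - 2 := by linarith
  have hs : (0 : ℝ) < x ^ 2 - 2 * x + 2 := by nlinarith
  set a := (n + 1) / 2 with hadef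
  set b := n - 2 with hbdef
  have hab : a ≤ b := by omega
  have hab1 : a ≤ b + 1 := by omega
  have hb1 : b + 1 = n - 1 := by omega
  obtain ⟨ρ, hρdef⟩ : ∃ c : ℝ, c = x ^ 2 / (2 * (x - 1)) := ⟨_, rfl⟩
  obtain ⟨ρ', hρ'def⟩ : ∃ c : ℝ, c = x ^ 2 / (4 * (x - 1)) := ⟨_, rfl⟩
  obtain ⟨η, hηdef⟩ : ∃ c : ℝ, c = x / 2 := ⟨_, rfl⟩
  obtain ⟨cP, hcPdef⟩ : ∃ c : ℝ, c = 2 ^ (n - 1) * (x - 1) ^ (n + 1) / (x ^ n * (x - 2)) := ⟨_, rfl⟩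
  obtain ⟨cE, hcEdef⟩ : ∃ c : ℝ, c = 2 ^ (2 * n - 1) * (x - 1) ^ (n + 1) / (x ^ n * (x - 2)) := ⟨_, rfl⟩
  obtain ⟨cQ, hcQdef⟩ : ∃ c : ℝ, c = (x - 1) ^ 2 / (x * (x - 2)) := ⟨_, rfl⟩
  obtain ⟨cH, hcHdef⟩ : ∃ c : ℝ, c = 2 ^ (n - 1) / x ^ 2 := ⟨_, rfl⟩
  obtain ⟨cG, hcGdef⟩ : ∃ c : ℝ, c = 1 / x ^ 2 := ⟨_, rfl⟩
  obtain ⟨D, hDdef⟩ : ∃ c : ℝ, c = x ^ (n - 2) := ⟨_, rfl⟩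
  have hD0 : (0 : ℝ) < D := by rw [hDdef]; positivity
  have hcP0 : (0 : ℝ) < cP := by rw [hcPdef]; positivity
  have hcE0 : (0 : ℝ) < cE := by rw [hcEdef]; positivity
  have hcQ0 : (0 : ℝ) < cQ := by rw [hcQdef]; positivity
  have hcH0 : (0 : ℝ) < cH := by rw [hcHdef]; positivity
  have hcG0 : (0 : ℝ) < cG := by rw [hcGdef]; positivity
  have hρ1 : ρ - 1 = (x ^ 2 - 2 * x + 2) / (2 * (x - 1)) := by
    rw [hρdef]; field_simp; ring
  have hρ'1 : ρ' - 1 = (x - 2) ^ 2 / (4 * (x - 1)) := by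
    rw [hρ'def]; field_simp; ring
  have hη1 : η - 1 = (x - 2) / 2 := by rw [hηdef]; ring
  have hρ1pos : (0 : ℝ) < ρ - 1 := by rw [hρ1]; positivity
  have hρ'1pos : (0 : ℝ) < ρ' - 1 := by rw [hρ'1]; positivity
  have hη1pos : (0 : ℝ) < η - 1 := by rw [hη1]; positivity
  have hρne1 : ρ ≠ 1 := by intro hc; rw [hc] at hρ1pos; norm_num at hρ1pos
  have hρ'ne1 : ρ' ≠ 1 := by intro hc; rw [hc] at hρ'1pos; norm_num at hρ'1pos
  have hηne1 : η ≠ 1 := by intro hc; rw [hc] at hη1pos; norm_num at hη1pos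
  have hxn1 : x ^ (n - 1) = x * D := by
    rw [hDdef, mul_comm, ← pow_succ]; congr 1; omega
  have hxn : x ^ n = x ^ 2 * D := by
    rw [hDdef, ← pow_add]; congr 1; omega
  -- per-i conversion equalities
  have ePgen : ∀ i : ℕ, n ≤ 2 * i → i ≤ n - 1 →
      (2 : ℝ) ^ (n - i - 1) * (x - 1) ^ (n - i - 1 + 2) * x ^ (i - (n - i - 1) - 1)
        = (x - 2) * (cP * ρ ^ i) := by
    intro i hi1 hi2
    have k1 : n - i - 1 = n - 1 - i := by omega
    have k2 : n - i - 1 + 2 = n + 1 - i := by omega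
    have k3 : i - (n - i - 1) - 1 = 2 * i - n := by omega
    rw [k2, k3, k1, pow_sub₀ (2:ℝ) two_ne_zero (by omega : i ≤ n - 1),
      pow_sub₀ (x - 1) (ne_of_gt hx1') (by omega : i ≤ n + 1),
      pow_sub₀ x hxne0 (by omega : n ≤ 2 * i), pow_mul, hρdef, hcPdef, div_pow, mul_pow]
    have h2i : ((2:ℝ) ^ i) ≠ 0 := by positivity
    have h1i : ((x - 1) ^ i) ≠ 0 := by positivity
    have hxi : ((x ^ 2 : ℝ) ^ i) ≠ 0 := by positivity
    have hxn' : (x ^ n : ℝ) ≠ 0 := by positivity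
    field_simp
  have eQgen : ∀ i : ℕ, 1 ≤ i →
      (x - 1) ^ 2 * x ^ (i - 1) = (x - 2) * (cQ * x ^ i) := by
    intro i hi
    rw [pow_sub₀ x hxne0 hi, hcQdef]
    field_simp
  have eRgen : ∀ i : ℕ, 2 ≤ i → i ≤ n - 1 →
      ((2 : ℝ) ^ (n - i - 1) - 1) * x ^ (i - 2) = cH * η ^ i - cG * x ^ i := by
    intro i hi1 hi2
    have k1 : n - i - 1 = n - 1 - i := by omega
    rw [k1, pow_sub₀ (2:ℝ) two_ne_zero (by omega : i ≤ n - 1),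
      pow_sub₀ x hxne0 hi1, hcHdef, hcGdef, hηdef, div_pow]
    have h2i : ((2:ℝ) ^ i) ≠ 0 := by positivity
    field_simp
  have eEgen : ∀ i : ℕ, i ≤ n →
      cE * ρ' ^ i = 2 ^ (n - i) * (cP * ρ ^ i) := by
    intro i hi
    rw [pow_sub₀ (2:ℝ) two_ne_zero hi, hcEdef, hcPdef, hρdef, hρ'def, div_pow, div_pow,
      show (4 : ℝ) * (x - 1) = 2 * (x - 1) * 2 by ring, mul_pow (2 * (x - 1)) 2,
      show 2 * n - 1 = n + (n - 1) from by omega, pow_add]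
    have h2i : ((2:ℝ) ^ i) ≠ 0 := by positivity
    have h1i : ((2 * (x - 1) : ℝ) ^ i) ≠ 0 := by positivity
    have hxn' : (x ^ n : ℝ) ≠ 0 := by positivity
    field_simp
  -- key power facts
  have hu : (x - 2) * (cP * ρ ^ (n - 1)) = (x - 1) ^ 2 * D := by
    have h := ePgen (n - 1) (by omega) (by omega)
    rw [show n - (n - 1) - 1 = 0 from by omega] at h
    rw [show n - 1 - 0 - 1 = n - 2 from by omega] at h
    rw [← hDdef] at h
    norm_num at h
    linarith [h]
  have hE : (x - 2) * (cE * ρ' ^ (n - 1)) = 2 * (x - 1) ^ 2 * D := by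
    have h := eEgen (n - 1) (by omega)
    rw [show n - (n - 1) = 1 from by omega, pow_one] at h
    rw [h]; linarith [hu]
  have hw : cH * η ^ (n - 1) = x * D / x ^ 2 := by
    rw [hcHdef, hηdef, div_pow, ← hxn1]
    have : ((2:ℝ) ^ (n-1)) ≠ 0 := by positivity
    field_simp
  -- Bernoulli bound
  have hBern : (n : ℝ) * ρ ^ a ≤ 4 * ρ ^ (n - 1) := by
    have h54 : (5 : ℝ) / 4 ≤ ρ - 1 := by
      rw [hρ1, le_div_iff₀ (by linarith : (0:ℝ) < 2 * (x - 1))]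
      nlinarith [mul_nonneg (by linarith : (0:ℝ) ≤ 2 * x - 3) (by linarith : (0:ℝ) ≤ x - 3)]
    set m := n - 1 - a with hmdef
    have hb := one_add_mul_le_pow (by linarith : (-2 : ℝ) ≤ ρ - 1) m
    rw [show 1 + (ρ - 1) = ρ from by ring] at hb
    have hm3 : (n : ℝ) ≤ 2 * (m : ℝ) + 3 := by
      have : n ≤ 2 * m + 3 := by omega
      exact_mod_cast this
    have hm0 : (0 : ℝ) ≤ (m : ℝ) := Nat.cast_nonneg m
    have hn4ρ : (n : ℝ) ≤ 4 * ρ ^ m := by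
      have hmm := mul_le_mul_of_nonneg_left h54 hm0
      linarith
    have hρa0 : (0 : ℝ) < ρ ^ a := by
      have : (0:ℝ) < ρ := by linarith [hρ1pos]
      positivity
    calc (n : ℝ) * ρ ^ a ≤ (4 * ρ ^ m) * ρ ^ a :=
          mul_le_mul_of_nonneg_right hn4ρ hρa0.le
      _ = 4 * ρ ^ (n - 1) := by rw [mul_assoc, ← pow_add, show m + a = n - 1 from by omega]
  -- n ≤ x^a  and x^a * x^a ≤ x^3 * D
  have hnxa : (n : ℝ) ≤ x ^ a := by
    have h1 : (n : ℝ) ≤ (3 : ℝ) ^ a := by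
      have := nat_le_three_pow n
      rw [← hadef] at this
      calc (n : ℝ) ≤ ((3 ^ a : ℕ) : ℝ) := by exact_mod_cast this
        _ = (3 : ℝ) ^ a := by push_cast; ring
    calc (n : ℝ) ≤ (3 : ℝ) ^ a := h1
      _ ≤ x ^ a := pow_le_pow_left₀ (by norm_num) hx3 a
  have hxaxa : x ^ a * x ^ a ≤ x ^ 3 * D := by
    rw [← pow_add, hDdef, ← pow_add]
    exact pow_le_pow_right₀ hx1.le (by omega)
  have hxa0 : (0 : ℝ) < x ^ a := by positivity
  -- rewrite the LHS double sum
  rw [Finset.sum_congr rfl (fun i hi => inner_sum_eq x hxne2 i (n - i - 1)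
    (by have := Finset.mem_Icc.mp hi; omega))]
  -- per-term lower bound
  have key : ∀ i ∈ Finset.Icc a b,
      (n : ℝ) * (cP * ρ ^ i) - cE * ρ' ^ i - (n : ℝ) * (cQ * x ^ i)
          - (n : ℝ) * (cH * η ^ i) + (n : ℝ) * (cG * x ^ i)
        ≤ (i : ℝ) * (((2 : ℝ) ^ (n - i - 1) * (x - 1) ^ (n - i - 1 + 2)
              * x ^ (i - (n - i - 1) - 1) - (x - 1) ^ 2 * x ^ (i - 1)) / (x - 2)
            - ((2 : ℝ) ^ (n - i - 1) - 1) * x ^ (i - 2)) := by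
    intro i hi
    have hmem := Finset.mem_Icc.mp hi
    have hi1 : n ≤ 2 * i := by omega
    have hi2 : i ≤ n - 1 := by omega
    have hi3 : 2 ≤ i := by omega
    rw [ePgen i hi1 hi2, eQgen i (by omega), eRgen i hi3 hi2, ← mul_sub,
      mul_div_cancel_left₀ _ (ne_of_gt hx2'), eEgen i (by omega)]
    have hu0 : (0 : ℝ) ≤ cP * ρ ^ i := by
      have : (0:ℝ) < ρ := by linarith [hρ1pos]
      positivity
    have hv0 : (0 : ℝ) ≤ cQ * x ^ i := by positivity
    have hwz : (0 : ℝ) ≤ cH * η ^ i - cG * x ^ i := by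
      rw [← eRgen i hi3 hi2]
      have h1 : (1 : ℝ) ≤ (2:ℝ) ^ (n - i - 1) := one_le_pow₀ (by norm_num)
      have h2 : (0 : ℝ) ≤ x ^ (i - 2) := by positivity
      have h3 := mul_nonneg (sub_nonneg.mpr h1) h2
      linarith
    have hin : (i : ℝ) ≤ (n : ℝ) := by exact_mod_cast (by omega : i ≤ n)
    have hni0 : (0 : ℝ) ≤ (n : ℝ) - (i : ℝ) := by linarith
    have hpow2 : (n : ℝ) - (i : ℝ) ≤ (2 : ℝ) ^ (n - i) := by
      have h1 : (n - i : ℕ) < 2 ^ (n - i) := (n - i).lt_two_pow_self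
      have h2 : ((n - i : ℕ) : ℝ) = (n : ℝ) - (i : ℝ) := by
        push_cast [Nat.cast_sub (by omega : i ≤ n)]; ring
      calc (n : ℝ) - (i : ℝ) = ((n - i : ℕ) : ℝ) := h2.symm
        _ ≤ ((2 ^ (n - i) : ℕ) : ℝ) := by exact_mod_cast h1.le
        _ = (2 : ℝ) ^ (n - i) := by push_cast; ring
    have t1 : (0 : ℝ) ≤ ((2 : ℝ) ^ (n - i) - ((n : ℝ) - i)) * (cP * ρ ^ i) :=
      mul_nonneg (by linarith) hu0
    have t2 : (0 : ℝ) ≤ ((n : ℝ) - i) * (cQ * x ^ i) := mul_nonneg hni0 hv0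
    have t3 : (0 : ℝ) ≤ ((n : ℝ) - i) * (cH * η ^ i - cG * x ^ i) := mul_nonneg hni0 hwz
    linarith only [t1, t2, t3]
  refine le_trans ?_ (Finset.sum_le_sum key)
  -- split the sum and evaluate geometric sums
  have split : ∑ i ∈ Finset.Icc a b,
      ((n : ℝ) * (cP * ρ ^ i) - cE * ρ' ^ i - (n : ℝ) * (cQ * x ^ i)
        - (n : ℝ) * (cH * η ^ i) + (n : ℝ) * (cG * x ^ i))
      = (n : ℝ) * cP * (∑ i ∈ Finset.Icc a b, ρ ^ i)
        - cE * (∑ i ∈ Finset.Icc a b, ρ' ^ i)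
        - (n : ℝ) * cQ * (∑ i ∈ Finset.Icc a b, x ^ i)
        - (n : ℝ) * cH * (∑ i ∈ Finset.Icc a b, η ^ i)
        + (n : ℝ) * cG * (∑ i ∈ Finset.Icc a b, x ^ i) := by
    rw [Finset.mul_sum, Finset.mul_sum, Finset.mul_sum, Finset.mul_sum, Finset.mul_sum,
      ← Finset.sum_sub_distrib, ← Finset.sum_sub_distrib, ← Finset.sum_sub_distrib,
      ← Finset.sum_add_distrib]
    exact Finset.sum_congr rfl fun i _ => by ring
  rw [split, geom_Icc ρ hρne1 a b hab1, geom_Icc ρ' hρ'ne1 a b hab1,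
    geom_Icc x hxne1 a b hab1, geom_Icc η hηne1 a b hab1, hb1]
  -- piece bounds
  have huv : cP * ρ ^ (n - 1) = (x - 1) ^ 2 * D / (x - 2) := by
    rw [eq_div_iff (ne_of_gt hx2')]; linarith only [hu]
  have piece1 : (n : ℝ) * cP * ((ρ ^ (n - 1) - ρ ^ a) / (ρ - 1))
      ≥ (n : ℝ) * D * (2 * (x - 1) ^ 3 / ((x - 2) * (x ^ 2 - 2 * x + 2))) - 16 * D := by
    have e1 : (n : ℝ) * cP * ((ρ ^ (n - 1) - ρ ^ a) / (ρ - 1))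
        = ((n : ℝ) * (cP * ρ ^ (n - 1)) - (n : ℝ) * (cP * ρ ^ a))
          * (2 * (x - 1) / (x ^ 2 - 2 * x + 2)) := by
      rw [hρ1]
      field_simp
    have hBern' : (n : ℝ) * (cP * ρ ^ a) ≤ 4 * (cP * ρ ^ (n - 1)) := by
      have := mul_le_mul_of_nonneg_left hBern hcP0.le
      linarith only [this]
    have hc0 : (0 : ℝ) ≤ 2 * (x - 1) / (x ^ 2 - 2 * x + 2) := by positivity
    rw [ge_iff_le, e1]
    calc (n : ℝ) * D * (2 * (x - 1) ^ 3 / ((x - 2) * (x ^ 2 - 2 * x + 2))) - 16 * D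
        ≤ ((n : ℝ) * (cP * ρ ^ (n - 1)) - 4 * (cP * ρ ^ (n - 1)))
            * (2 * (x - 1) / (x ^ 2 - 2 * x + 2)) := by
          rw [huv, ← sub_nonneg]
          have expand : ((n : ℝ) * ((x - 1) ^ 2 * D / (x - 2))
                - 4 * ((x - 1) ^ 2 * D / (x - 2))) * (2 * (x - 1) / (x ^ 2 - 2 * x + 2))
              - ((n : ℝ) * D * (2 * (x - 1) ^ 3 / ((x - 2) * (x ^ 2 - 2 * x + 2))) - 16 * D)
            = (16 * D * ((x - 2) * (x ^ 2 - 2 * x + 2)) - 8 * (x - 1) ^ 3 * D)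
                / ((x - 2) * (x ^ 2 - 2 * x + 2)) := by
            field_simp
            ring
          rw [expand]
          apply div_nonneg _ (by positivity)
          have hpoly : (0:ℝ) ≤ 16 * ((x - 2) * (x ^ 2 - 2 * x + 2)) - 8 * (x - 1) ^ 3 := by
            have hq := mul_nonneg (by linarith only [hx3] : (0:ℝ) ≤ x - 3)
              (by nlinarith only [sq_nonneg (x - 1)] : (0:ℝ) ≤ x ^ 2 - 2 * x + 3)
            nlinarith only [hq]
          have := mul_nonneg hD0.le hpoly
          linarith only [this]
      _ ≤ ((n : ℝ) * (cP * ρ ^ (n - 1)) - (n : ℝ) * (cP * ρ ^ a))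
            * (2 * (x - 1) / (x ^ 2 - 2 * x + 2)) := by
          apply mul_le_mul_of_nonneg_right _ hc0
          linarith only [hBern']
  have piece2 : cE * ((ρ' ^ (n - 1) - ρ' ^ a) / (ρ' - 1)) ≤ 64 * D := by
    have hρ'a : (0 : ℝ) ≤ ρ' ^ a := by
      have : (0:ℝ) < ρ' := by rw [hρ'def]; positivity
      positivity
    have step1 : cE * ((ρ' ^ (n - 1) - ρ' ^ a) / (ρ' - 1)) ≤ cE * (ρ' ^ (n - 1) / (ρ' - 1)) := by
      apply mul_le_mul_of_nonneg_left _ hcE0.le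
      gcongr
      linarith only [hρ'a]
    have hEv : cE * ρ' ^ (n - 1) = 2 * (x - 1) ^ 2 * D / (x - 2) := by
      rw [eq_div_iff (ne_of_gt hx2')]; linarith only [hE]
    calc cE * ((ρ' ^ (n - 1) - ρ' ^ a) / (ρ' - 1)) ≤ cE * (ρ' ^ (n - 1) / (ρ' - 1)) := step1
      _ = (2 * (x - 1) ^ 2 * D / (x - 2)) / ((x - 2) ^ 2 / (4 * (x - 1))) := by
          rw [← mul_div_assoc, hEv, hρ'1]
      _ = 8 * (x - 1) ^ 3 * D / (x - 2) ^ 3 := by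
          field_simp
          ring
      _ ≤ 64 * D := by
          rw [div_le_iff₀ (by positivity)]
          have h1 : (x - 1) ^ 3 ≤ (2 * (x - 2)) ^ 3 :=
            pow_le_pow_left₀ (by linarith only [hx3]) (by linarith only [hx3]) 3
          have h2 := mul_le_mul_of_nonneg_left h1 hD0.le
          linarith only [h2]
  have piece3 : (n : ℝ) * cQ * ((x * D - x ^ a) / (x - 1))
      ≤ (n : ℝ) * D * ((x - 1) / (x - 2)) := by
    have step1 : (x * D - x ^ a) / (x - 1) ≤ x * D / (x - 1) := by
      gcongr
      linarith only [hxa0.le]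
    calc (n : ℝ) * cQ * ((x * D - x ^ a) / (x - 1))
        ≤ (n : ℝ) * cQ * (x * D / (x - 1)) := by
          apply mul_le_mul_of_nonneg_left step1 (by positivity)
      _ = (n : ℝ) * D * ((x - 1) / (x - 2)) := by
          rw [hcQdef]
          field_simp
  have piece4 : (n : ℝ) * cH * ((η ^ (n - 1) - η ^ a) / (η - 1))
      ≤ (n : ℝ) * D * (2 / (x * (x - 2))) := by
    have hηa : (0 : ℝ) ≤ η ^ a := by
      have : (0:ℝ) < η := by rw [hηdef]; positivity
      positivity
    have step1 : (η ^ (n - 1) - η ^ a) / (η - 1) ≤ η ^ (n - 1) / (η - 1) := by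
      gcongr
      linarith only [hηa]
    calc (n : ℝ) * cH * ((η ^ (n - 1) - η ^ a) / (η - 1))
        ≤ (n : ℝ) * cH * (η ^ (n - 1) / (η - 1)) := by
          apply mul_le_mul_of_nonneg_left step1 (by positivity)
      _ = (n : ℝ) * ((cH * η ^ (n - 1)) / (η - 1)) := by ring
      _ = (n : ℝ) * D * (2 / (x * (x - 2))) := by
          rw [hw, hη1]
          field_simp
  have piece5 : (n : ℝ) * cG * ((x * D - x ^ a) / (x - 1))
      ≥ (n : ℝ) * D * (1 / (x * (x - 1))) - x ^ 3 * D := by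
    have hnum : (n : ℝ) * x ^ a ≤ x ^ 3 * D * (x ^ 2 * (x - 1)) := by
      have h1 : (n : ℝ) * x ^ a ≤ x ^ a * x ^ a :=
        mul_le_mul_of_nonneg_right hnxa hxa0.le
      have h2 : (1 : ℝ) ≤ x ^ 2 * (x - 1) := by nlinarith only [hx3]
      have h3 : x ^ 3 * D ≤ x ^ 3 * D * (x ^ 2 * (x - 1)) :=
        le_mul_of_one_le_right (by positivity) h2
      linarith only [hxaxa, h1, h3]
    rw [ge_iff_le, ← sub_nonneg, hcGdef]
    have expand : (n : ℝ) * (1 / x ^ 2) * ((x * D - x ^ a) / (x - 1))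
        - ((n : ℝ) * D * (1 / (x * (x - 1))) - x ^ 3 * D)
        = (x ^ 3 * D * (x ^ 2 * (x - 1)) - (n : ℝ) * x ^ a) / (x ^ 2 * (x - 1)) := by
      field_simp
      ring
    rw [expand]
    apply div_nonneg _ (by positivity)
    linarith only [hnum]
  -- final assembly
  rw [hxn, hxn1, ← hDdef]
  have keyid : (n : ℝ) * ((x ^ 2 * D - x * D) / (x ^ 2 - 2 * x + 2) - D / ((x - 1) * (x - 2)))
      = (n : ℝ) * D * (2 * (x - 1) ^ 3 / ((x - 2) * (x ^ 2 - 2 * x + 2)))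
        - (n : ℝ) * D * ((x - 1) / (x - 2)) - (n : ℝ) * D * (2 / (x * (x - 2)))
        + (n : ℝ) * D * (1 / (x * (x - 1))) := by
    field_simp
    ring
  have h80 : 16 * D + 64 * D + x ^ 3 * D ≤ (x + 12) * (x ^ 2 * D) := by
    have hq : (0:ℝ) ≤ (12 * x ^ 2 - 80) * D :=
      mul_nonneg (by nlinarith only [hx3]) hD0.le
    linarith only [hq]
  linarith only [piece1, piece2, piece3, piece4, piece5, keyid, h80]
end
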